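/- A polynomial vector field v of degree at most k−1 on ℝ^d satisfies v(x)·x ≡ 0 if and only if v(x) = N(x)·x for some polynomial matrix field N of degree at most k−2 taking values in skew-symmetric d×d matrices; i.e., ker(·x) ∩ ℙ_{k−1}(ℝ^d; ℝ^d) = ℙ_{k−2}(ℝ^d; 𝕂)·x, where 𝕂 denotes skew-symmetric matrices. -/

import Mathlib

open MvPolynomial Finset

namespace Stmt5Aux

variable {d : ℕ}

/-- Divide each homogeneous component of degree `m` by `m + 2`. -/
noncomputable def psi (p : MvPolynomial (Fin d) ℝ) : MvPolynomial (Fin d) ℝ :=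
  ∑ σ ∈ p.support, monomial σ (coeff σ p / ((σ.sum fun _ e => e : ℕ) + 2))

lemma coeff_psi (p : MvPolynomial (Fin d) ℝ) (τ : Fin d →₀ ℕ) :
    coeff τ (psi p) = coeff τ p / ((τ.sum fun _ e => e : ℕ) + 2) := by
  classical
  unfold psi
  rw [coeff_sum]
  simp only [coeff_monomial]
  rw [Finset.sum_ite_eq' p.support τ (fun σ => coeff σ p / ((σ.sum fun _ e => e : ℕ) + 2))]
  split_ifs with h
  · rfl
  · rw [notMem_support_iff] at h
    simp [h]

lemma support_psi (p : MvPolynomial (Fin d) ℝ) : (psi p).support ⊆ p.support := by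
  intro τ hτ
  rw [mem_support_iff] at hτ ⊢
  rw [coeff_psi] at hτ
  intro h
  rw [h] at hτ
  simp at hτ

lemma totalDegree_psi_le (p : MvPolynomial (Fin d) ℝ) :
    (psi p).totalDegree ≤ p.totalDegree :=
  totalDegree_le_of_support_subset (support_psi p)

lemma psi_sub (p q : MvPolynomial (Fin d) ℝ) : psi (p - q) = psi p - psi q := by
  apply MvPolynomial.ext
  intro τ
  simp [coeff_psi, coeff_sub, sub_div]

lemma coeff_pderiv (j : Fin d) (p : MvPolynomial (Fin d) ℝ) (τ : Fin d →₀ ℕ) :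
    coeff τ (pderiv j p) = ((τ j + 1 : ℕ) : ℝ) * coeff (τ + Finsupp.single j 1) p := by
  classical
  induction p using MvPolynomial.induction_on' with
  | monomial s a =>
    rw [pderiv_monomial]
    simp only [coeff_monomial]
    by_cases hs : s = τ + Finsupp.single j 1
    · subst hs
      have h1 : τ + Finsupp.single j 1 - Finsupp.single j 1 = τ := by
        ext x; simp [Finsupp.single_apply]
      have h2 : (τ + Finsupp.single j 1 : Fin d →₀ ℕ) j = τ j + 1 := by simp
      rw [h1, h2, if_pos rfl, if_pos rfl]
      push_cast
      ring
    · rw [if_neg hs]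
      by_cases h1 : s - Finsupp.single j 1 = τ
      · rw [if_pos h1]
        have hsj : s j = 0 := by
          by_contra hsj
          apply hs
          rw [← h1]
          ext x
          simp only [Finsupp.coe_add, Pi.add_apply, Finsupp.coe_tsub, Pi.sub_apply,
            Finsupp.single_apply]
          by_cases hx : j = x
          · subst hx; simp; omega
          · simp [hx]
        simp [hsj]
      · rw [if_neg h1, mul_zero]
  | add p q hp hq =>
    rw [map_add, coeff_add, coeff_add, hp, hq, mul_add]

lemma totalDegree_pderiv_add_one_le (j : Fin d) (p : MvPolynomial (Fin d) ℝ)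
    (h : pderiv j p ≠ 0) : (pderiv j p).totalDegree + 1 ≤ p.totalDegree := by
  have key : ∀ τ ∈ (pderiv j p).support, (τ.sum fun _ e => e) + 1 ≤ p.totalDegree := by
    intro τ hτ
    rw [mem_support_iff, coeff_pderiv] at hτ
    have h2 : coeff (τ + Finsupp.single j 1) p ≠ 0 := by
      intro h0; rw [h0, mul_zero] at hτ; exact hτ rfl
    have h3 := le_totalDegree (p := p) (s := τ + Finsupp.single j 1)
      (by rwa [mem_support_iff])
    rw [Finsupp.sum_add_index (by simp) (by intros; rfl)] at h3
    simpa [Finsupp.sum_single_index] using h3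
  obtain ⟨τ, hτ⟩ := (pderiv j p).support.nonempty_of_ne_empty (by
    intro h0
    exact h (MvPolynomial.support_eq_empty.mp h0))
  have h1 : (pderiv j p).totalDegree ≤ p.totalDegree - 1 := by
    apply Finset.sup_le
    intro τ' hτ'
    have := key τ' hτ'
    omega
  have h2 := key τ hτ
  omega

lemma main_identity (v : Fin d → MvPolynomial (Fin d) ℝ)
    (hv : ∑ i : Fin d, X i * v i = 0) (i : Fin d) :
    v i = ∑ j : Fin d, psi (pderiv j (v i) - pderiv i (v j)) * X j := by
  classical
  -- derived identity: ∑ j, X j * pderiv i (v j) = - v i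
  have h2 : ∑ j : Fin d, X j * pderiv i (v j) = - v i := by
    have := congrArg (pderiv i) hv
    rw [map_sum, map_zero] at this
    have heq : ∀ j : Fin d, pderiv i (X j * v j)
        = (if i = j then v j else 0) + X j * pderiv i (v j) := by
      intro j
      rw [pderiv_mul, pderiv_X]
      by_cases h : i = j
      · subst h; simp
      · simp [h, Pi.single_apply]
    rw [Finset.sum_congr rfl (fun j _ => heq j)] at this
    rw [Finset.sum_add_distrib] at this
    simp only [Finset.sum_ite_eq, Finset.mem_univ, if_pos] at this
    linear_combination this
  apply MvPolynomial.ext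
  intro σ
  set S : ℝ := ((σ.sum fun _ e => e : ℕ) : ℝ) with hS
  have hterm : ∀ j : Fin d,
      coeff σ (psi (pderiv j (v i) - pderiv i (v j)) * X j)
        = ((σ j : ℝ) * coeff σ (v i) - coeff σ (X j * pderiv i (v j))) / (S + 1) := by
    intro j
    rw [coeff_mul_X', coeff_X_mul']
    by_cases hj : j ∈ σ.support
    · rw [if_pos hj, if_pos hj, coeff_psi, coeff_sub, coeff_pderiv]
      have hσj : 1 ≤ σ j := by
        rw [Finsupp.mem_support_iff] at hj; omega
      have hadd : σ - Finsupp.single j 1 + Finsupp.single j 1 = σ := by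
        ext x
        simp only [Finsupp.coe_add, Pi.add_apply, Finsupp.coe_tsub, Pi.sub_apply,
          Finsupp.single_apply]
        by_cases hx : j = x
        · subst hx; simp; omega
        · simp [hx]
      have hsum : ((σ - Finsupp.single j 1).sum fun _ e => e) + 1
          = (σ.sum fun _ e => e) := by
        conv_rhs => rw [← hadd]
        rw [Finsupp.sum_add_index (by simp) (by intros; rfl)]
        simp [Finsupp.sum_single_index]
      have hjj : (σ - Finsupp.single j 1 : Fin d →₀ ℕ) j + 1 = σ j := by
        simp [Finsupp.single_apply]
        omega
      rw [hadd, hjj]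
      have hden : (((σ - Finsupp.single j 1).sum fun _ e => e : ℕ) : ℝ) + 2 = S + 1 := by
        have hnat : ((σ - Finsupp.single j 1).sum fun _ e => e) + 2
            = (σ.sum fun _ e => e) + 1 := by omega
        rw [hS]
        exact_mod_cast hnat
      rw [hden]
    · rw [if_neg hj, if_neg hj]
      have hσj : (σ j : ℝ) = 0 := by
        rw [Finsupp.mem_support_iff] at hj
        push_neg at hj
        simp [hj]
      rw [hσj]
      simp
  rw [coeff_sum, Finset.sum_congr rfl (fun j _ => hterm j)]
  rw [← Finset.sum_div, Finset.sum_sub_distrib]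
  have hsum1 : ∑ j : Fin d, (σ j : ℝ) * coeff σ (v i) = S * coeff σ (v i) := by
    rw [← Finset.sum_mul, hS]
    congr 1
    rw [Finsupp.sum_fintype _ _ (fun _ => rfl)]
    push_cast
    rfl
  have hsum2 : ∑ j : Fin d, coeff σ (X j * pderiv i (v j)) = - coeff σ (v i) := by
    rw [← coeff_sum, h2, coeff_neg]
  rw [hsum1, hsum2]
  have hSpos : S + 1 ≠ 0 := by
    rw [hS]; positivity
  field_simp
  ring

end Stmt5Aux

open Stmt5Aux in
/-- A polynomial vector field `v` of degree at most `k-1` satisfies `v(x)·x ≡ 0` iff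
`v(x) = N(x) x` for a skew-symmetric-matrix-valued polynomial field `N` of degree at most
`k-2` (the zero space when `k = 1`, which is encoded by the condition
`N i j = 0 ∨ deg (N i j) + 2 ≤ k`). -/
theorem stmt_5 (d k : ℕ) (hd : 1 ≤ d) (hk : 1 ≤ k) :
    {v : Fin d → MvPolynomial (Fin d) ℝ |
        (∀ i, (v i).totalDegree ≤ k - 1) ∧ ∑ i : Fin d, X i * v i = 0} =
    {v : Fin d → MvPolynomial (Fin d) ℝ |
        ∃ N : Fin d → Fin d → MvPolynomial (Fin d) ℝ,
          (∀ i j, N i j = 0 ∨ (N i j).totalDegree + 2 ≤ k) ∧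
          (∀ i j, N j i = - N i j) ∧
          ∀ i, v i = ∑ j : Fin d, N i j * X j} := by
  ext v
  simp only [Set.mem_setOf_eq]
  constructor
  · rintro ⟨hdeg, hv⟩
    refine ⟨fun i j => psi (pderiv j (v i) - pderiv i (v j)), ?_, ?_, ?_⟩
    · intro i j
      show psi (pderiv j (v i) - pderiv i (v j)) = 0
        ∨ (psi (pderiv j (v i) - pderiv i (v j))).totalDegree + 2 ≤ k
      rcases Nat.lt_or_ge k 2 with hk2 | hk2
      · -- k = 1 : all v i constants, derivatives vanish
        left
        have hk1 : k = 1 := by omega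
        have hc : ∀ l m : Fin d, pderiv m (v l) = 0 := by
          intro l m
          by_contra h
          have := totalDegree_pderiv_add_one_le m (v l) h
          have := hdeg l
          omega
        rw [hc, hc, sub_zero]
        apply MvPolynomial.ext
        intro τ
        simp [coeff_psi]
      · right
        have hle : (psi (pderiv j (v i) - pderiv i (v j))).totalDegree ≤ k - 2 := by
          refine (totalDegree_psi_le _).trans ?_
          refine (totalDegree_sub _ _).trans ?_
          apply max_le
          · by_cases h : pderiv j (v i) = 0
            · simp [h]
            · have := totalDegree_pderiv_add_one_le j (v i) h
              have := hdeg i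
              omega
          · by_cases h : pderiv i (v j) = 0
            · simp [h]
            · have := totalDegree_pderiv_add_one_le i (v j) h
              have := hdeg j
              omega
        omega
    · intro i j
      show psi (pderiv i (v j) - pderiv j (v i)) = - psi (pderiv j (v i) - pderiv i (v j))
      rw [psi_sub, psi_sub]
      ring
    · intro i
      show v i = ∑ j : Fin d, psi (pderiv j (v i) - pderiv i (v j)) * X j
      exact main_identity v hv i
  · rintro ⟨N, hNdeg, hNskew, hvN⟩
    constructor
    · intro i
      rw [hvN i]
      refine (totalDegree_finset_sum _ _).trans ?_
      apply Finset.sup_le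
      intro j _
      rcases hNdeg i j with h | h
      · simp [h]
      · refine (totalDegree_mul _ _).trans ?_
        have := totalDegree_X (R := ℝ) j
        omega
    · have key : ∀ i j : Fin d, X i * (N i j * X j) + X j * (N j i * X i) = 0 := by
        intro i j
        rw [hNskew i j]
        ring
      have h1 : ∑ i : Fin d, X i * v i = ∑ i : Fin d, ∑ j : Fin d, X i * (N i j * X j) := by
        apply Finset.sum_congr rfl
        intro i _
        rw [hvN i, Finset.mul_sum]
      have h2 : (∑ i : Fin d, ∑ j : Fin d, X i * (N i j * X j))
          + ∑ i : Fin d, ∑ j : Fin d, X i * (N i j * X j) = 0 := by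
        conv_lhs => rw [show (∑ i : Fin d, ∑ j : Fin d, X i * (N i j * X j))
            + ∑ i : Fin d, ∑ j : Fin d, X i * (N i j * X j)
          = (∑ i : Fin d, ∑ j : Fin d, X i * (N i j * X j))
            + ∑ j : Fin d, ∑ i : Fin d, X i * (N i j * X j) from by rw [Finset.sum_comm]]
        rw [← Finset.sum_add_distrib]
        apply Finset.sum_eq_zero
        intro i _
        rw [← Finset.sum_add_distrib]
        apply Finset.sum_eq_zero
        intro j _
        exact key i j
      rw [h1]
      exact add_self_eq_zero.mp h2
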